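/- Drift bound for regular profiles: if f is an (m,M)-regular profile with M ≥ 1, then for every α ∈ [0,1] one has Uf(α) − f(α) ≤ 1 − 1/(2M). -/

import Mathlib

open MeasureTheory Set

/-- The neighbourhood `N_α(f)` of an agent `α ∈ [0,1]`:
all agents `β ∈ [0,1]` whose opinion is within distance 1 of that of `α`. -/
def nbhdHK (f : ℝ → ℝ) (α : ℝ) : Set ℝ :=
  {β | β ∈ Icc (0:ℝ) 1 ∧ |f β - f α| ≤ 1}

/-- The Hegselmann–Krause updating operator `U`:
`Uf(α)` is the average of `f` over `N_α(f)` if that set has positive Lebesgue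
measure, and `f(α)` otherwise. -/
noncomputable def updateHK (f : ℝ → ℝ) (α : ℝ) : ℝ :=
  if 0 < (volume (nbhdHK f α)).toReal then
    (∫ β in nbhdHK f α, f β) / (volume (nbhdHK f α)).toReal
  else f α

/-- `f` is `(m,M)`-regular on `S`: `m·|α-β| ≤ |f(α)-f(β)| ≤ M·|α-β|` on `S`. -/
def RegularOnHK (m M : ℝ) (f : ℝ → ℝ) (S : Set ℝ) : Prop :=
  ∀ α ∈ S, ∀ β ∈ S, m * |α - β| ≤ |f α - f β| ∧ |f α - f β| ≤ M * |α - β|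

/-- drift bound for regular profiles: if `f` is an `(m,M)`-regular
profile with `M ≥ 1`, then `Uf(α) - f(α) ≤ 1 - 1/(2M)` for all `α ∈ [0,1]`. -/
theorem stmt10 (m M : ℝ) (hm : 0 < m) (hM : 1 ≤ M) (f : ℝ → ℝ)
    (hmono : MonotoneOn f (Icc 0 1)) (hreg : RegularOnHK m M f (Icc 0 1)) :
    ∀ α ∈ Icc (0:ℝ) 1, updateHK f α - f α ≤ 1 - 1 / (2 * M) := by
  intro α hα
  have hM0 : (0:ℝ) < M := lt_of_lt_of_le one_pos hM
  set c : ℝ := 1 - 1 / (2 * M) with hc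
  clear_value c
  have h2M : (0:ℝ) < 2 * M := by linarith
  have hcM : 1 / (2 * M) ≤ 1 / 2 := by
    rw [div_le_div_iff₀ h2M two_pos]; linarith
  have hcMpos : 0 < 1 / (2 * M) := by positivity
  have hc2 : (1:ℝ)/2 ≤ c := by rw [hc]; linarith
  simp only [updateHK]
  by_cases hv : 0 < (volume (nbhdHK f α)).toReal
  swap
  · rw [if_neg hv]; simp only [sub_self]; linarith
  rw [if_pos hv]
  set N := nbhdHK f α with hNdef
  have hαN : α ∈ N := ⟨hα, by simp⟩
  have hNsub : N ⊆ Icc 0 1 := fun x hx => hx.1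
  have hbdd : BddAbove N := ⟨1, fun x hx => (hNsub hx).2⟩
  have hbddb : BddBelow N := ⟨0, fun x hx => (hNsub hx).1⟩
  have hne : N.Nonempty := ⟨α, hαN⟩
  set a := sInf N with hadef
  set b := sSup N with hbdef
  have haα : a ≤ α := csInf_le hbddb hαN
  have hαb : α ≤ b := le_csSup hbdd hαN
  have hab : a ≤ b := haα.trans hαb
  have ha0 : 0 ≤ a := le_csInf hne (fun x hx => (hNsub hx).1)
  have hb1 : b ≤ 1 := csSup_le hne (fun x hx => (hNsub hx).2)
  have haI : a ∈ Icc (0:ℝ) 1 := ⟨ha0, haα.trans hα.2⟩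
  have hbI : b ∈ Icc (0:ℝ) 1 := ⟨hα.1.trans hαb, hb1⟩
  have hlip : ∀ x ∈ Icc (0:ℝ) 1, ∀ y ∈ Icc (0:ℝ) 1, f x - f y ≤ M * |x - y| :=
    fun x hx y hy => (le_abs_self _).trans (hreg x hx y hy).2
  -- the infimum belongs to N
  have haN : a ∈ N := by
    refine ⟨haI, abs_le.2 ⟨?_, ?_⟩⟩
    · -- -1 ≤ f a - f α
      by_contra hcon
      push_neg at hcon
      set ε : ℝ := (f α - 1 - f a) / M with hε
      have hεpos : 0 < ε := by
        apply div_pos _ hM0; linarith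
      obtain ⟨x, hxN, hxlt⟩ := exists_lt_of_csInf_lt hne
        (by linarith : sInf N < a + ε)
      have hax : a ≤ x := csInf_le hbddb hxN
      have h1 : f α - 1 ≤ f x := by
        have := (abs_le.1 hxN.2).1; linarith
      have h2 : f x - f a ≤ M * |x - a| := hlip x (hNsub hxN) a haI
      rw [abs_of_nonneg (by linarith)] at h2
      have h3 : M * (x - a) < M * ε := by
        apply mul_lt_mul_of_pos_left (by linarith) hM0
      rw [hε, mul_div_cancel₀ _ hM0.ne'] at h3
      linarith
    · have hfa : f a ≤ f α := hmono haI hα haα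
      linarith
  -- the supremum belongs to N
  have hbN : b ∈ N := by
    refine ⟨hbI, abs_le.2 ⟨?_, ?_⟩⟩
    · have hfb : f α ≤ f b := hmono hα hbI hαb
      linarith
    · -- f b - f α ≤ 1
      by_contra hcon
      push_neg at hcon
      set ε : ℝ := (f b - f α - 1) / M with hε
      have hεpos : 0 < ε := by
        apply div_pos _ hM0; linarith
      obtain ⟨x, hxN, hxlt⟩ := exists_lt_of_lt_csSup hne
        (by linarith : b - ε < sSup N)
      have hxb : x ≤ b := le_csSup hbdd hxN
      have h1 : f x ≤ f α + 1 := by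
        have := (abs_le.1 hxN.2).2; linarith
      have h2 : f b - f x ≤ M * |b - x| := hlip b hbI x (hNsub hxN)
      rw [abs_of_nonneg (by linarith)] at h2
      have h3 : M * (b - x) < M * ε := by
        apply mul_lt_mul_of_pos_left (by linarith) hM0
      rw [hε, mul_div_cancel₀ _ hM0.ne'] at h3
      linarith
  -- N is exactly the interval [a, b]
  have hNicc : N = Icc a b := by
    apply Subset.antisymm
    · exact fun x hx => ⟨csInf_le hbddb hx, le_csSup hbdd hx⟩
    · intro x hx
      have hxI : x ∈ Icc (0:ℝ) 1 := ⟨ha0.trans hx.1, hx.2.trans hb1⟩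
      refine ⟨hxI, abs_le.2 ⟨?_, ?_⟩⟩
      · have h1 := (abs_le.1 haN.2).1
        have h2 : f a ≤ f x := hmono haI hxI hx.1
        linarith
      · have h1 := (abs_le.1 hbN.2).2
        have h2 : f x ≤ f b := hmono hxI hbI hx.2
        linarith
  have hvol : (volume N).toReal = b - a := by
    rw [hNicc, Real.volume_Icc, ENNReal.toReal_ofReal (by linarith : (0:ℝ) ≤ b - a)]
  rw [hvol] at hv ⊢
  rw [sub_le_iff_le_add, div_le_iff₀ hv]
  -- convert set integral to interval integral
  have hint : ∫ β in N, f β = ∫ x in a..b, f x := by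
    rw [hNicc, integral_Icc_eq_integral_Ioc, ← intervalIntegral.integral_of_le hab]
  rw [hint]
  -- integrability
  have hfi : ∀ p q : ℝ, a ≤ p → p ≤ q → q ≤ b → IntervalIntegrable f volume p q := by
    intro p q h1 h2 h3
    apply MonotoneOn.intervalIntegrable
    rw [uIcc_of_le h2]
    exact hmono.mono (Icc_subset_Icc (ha0.trans h1) (h3.trans hb1))
  set K : ℝ := f α + c with hK
  set h : ℝ → ℝ := fun x => f x - K with hh
  have hhi : ∀ p q : ℝ, a ≤ p → p ≤ q → q ≤ b → IntervalIntegrable h volume p q :=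
    fun p q h1 h2 h3 => (hfi p q h1 h2 h3).sub intervalIntegrable_const
  -- value of the linear comparison integrals
  have lin_int : ∀ p q : ℝ, (∫ x in p..q, (M * (x - α) - c))
      = M * ((q^2 - p^2)/2 - α * (q - p)) - c * (q - p) := by
    intro p q
    have h1 : IntervalIntegrable (fun x : ℝ => M * x) volume p q :=
      (continuous_const.mul continuous_id).intervalIntegrable p q
    have heq : (fun x : ℝ => M * (x - α) - c) = fun x : ℝ => M * x - (M * α + c) := by
      funext x; ring
    rw [heq, intervalIntegral.integral_sub h1 intervalIntegrable_const,
      intervalIntegral.integral_const_mul, integral_id, intervalIntegral.integral_const]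
    simp only [smul_eq_mul]; ring
  have hcont : IntervalIntegrable (fun x : ℝ => M * (x - α) - c) volume α b :=
    (Continuous.intervalIntegrable (by fun_prop) α b)
  have hcont' : ∀ p q : ℝ, IntervalIntegrable (fun x : ℝ => M * (x - α) - c) volume p q :=
    fun p q => (Continuous.intervalIntegrable (by fun_prop) p q)
  -- bound on the left part
  have hleft : (∫ x in a..α, h x) ≤ 0 := by
    have : (∫ x in a..α, h x) ≤ ∫ x in a..α, (0:ℝ) := by
      apply intervalIntegral.integral_mono_on haα (hhi a α le_rfl haα hαb)
        intervalIntegrable_const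
      intro x hx
      have hxI : x ∈ Icc (0:ℝ) 1 := ⟨ha0.trans hx.1, hx.2.trans hα.2⟩
      have : f x ≤ f α := hmono hxI hα hx.2
      simp only [hh, hK]; linarith
    simpa using this
  -- pointwise bounds on the right part
  have hub1 : ∀ x ∈ Icc α b, h x ≤ M * (x - α) - c := by
    intro x hx
    have hxI : x ∈ Icc (0:ℝ) 1 := ⟨hα.1.trans hx.1, hx.2.trans hb1⟩
    have := hlip x hxI α hα
    rw [abs_of_nonneg (by linarith [hx.1])] at this
    simp only [hh, hK]; linarith
  have hub2 : ∀ x ∈ Icc α b, h x ≤ 1 - c := by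
    intro x hx
    have hxN : x ∈ N := by
      rw [hNicc]; exact ⟨haα.trans hx.1, hx.2⟩
    have := (abs_le.1 hxN.2).2
    simp only [hh, hK]; linarith
  -- bound on the right part
  have hright : (∫ x in α..b, h x) ≤ 0 := by
    by_cases hcase : b ≤ α + 1 / M
    · -- short neighbourhood: linear bound all the way
      have hm1 : (∫ x in α..b, h x) ≤ ∫ x in α..b, (M * (x - α) - c) := by
        exact intervalIntegral.integral_mono_on hαb (hhi α b haα hαb le_rfl)
          (hcont' α b) hub1
      rw [lin_int] at hm1
      have h1 : 0 ≤ b - α := by linarith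
      have h2 : M * (b - α) ≤ 1 := by
        have : M * (b - α) ≤ M * (1 / M) :=
          mul_le_mul_of_nonneg_left (by linarith) hM0.le
        rwa [mul_one_div_cancel hM0.ne'] at this
      nlinarith [mul_le_mul_of_nonneg_right hc2 h1, mul_le_mul_of_nonneg_left h2 h1]
    · -- long neighbourhood: split at α + 1/M
      push_neg at hcase
      set d : ℝ := α + 1 / M with hd
      clear_value d
      have hαd : α ≤ d := by
        have : 0 < 1 / M := by positivity
        linarith
      have hdb : d ≤ b := hcase.le
      have hsplit : (∫ x in α..b, h x) = (∫ x in α..d, h x) + ∫ x in d..b, h x :=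
        (intervalIntegral.integral_add_adjacent_intervals
          (hhi α d haα hαd (hdb)) (hhi d b (haα.trans hαd) hdb le_rfl)).symm
      have hm1 : (∫ x in α..d, h x) ≤ ∫ x in α..d, (M * (x - α) - c) := by
        apply intervalIntegral.integral_mono_on hαd (hhi α d haα hαd hdb)
          (hcont' α d)
        intro x hx
        exact hub1 x ⟨hx.1, hx.2.trans hdb⟩
      rw [lin_int] at hm1
      have hm2 : (∫ x in d..b, h x) ≤ ∫ x in d..b, (1 - c : ℝ) := by
        apply intervalIntegral.integral_mono_on hdb (hhi d b (haα.trans hαd) hdb le_rfl)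
          intervalIntegrable_const
        intro x hx
        exact hub2 x ⟨hαd.trans hx.1, hx.2⟩
      rw [intervalIntegral.integral_const, smul_eq_mul] at hm2
      have hMinv : M * (1 / M) = 1 := mul_one_div_cancel hM0.ne'
      have hval1 : M * ((d^2 - α^2)/2 - α * (d - α)) - c * (d - α)
          = 1 / (2 * M) - c / M := by
        rw [hd]; field_simp; ring
      rw [hval1] at hm1
      have hval2 : (b - d) * (1 - c) = (b - d) / (2 * M) := by
        rw [hc]; field_simp; ring
      rw [hval2] at hm2
      have hfin : 1 / (2 * M) - c / M + (b - d) / (2 * M) ≤ 0 := by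
        rw [hc, hd]
        have hb1' : b - α ≤ 1 := by linarith [hα.1]
        have key : (b - α - 1) / (2 * M) ≤ 0 := by
          apply div_nonpos_of_nonpos_of_nonneg (by linarith) h2M.le
        have : 1 / (2 * M) - (1 - 1 / (2 * M)) / M + (b - (α + 1 / M)) / (2 * M)
            = (b - α - 1) / (2 * M) := by field_simp; ring
        linarith
      linarith [hsplit, hm1, hm2, hfin]
  -- combine
  have htot : (∫ x in a..b, h x) ≤ 0 := by
    have hsplit : (∫ x in a..b, h x) = (∫ x in a..α, h x) + ∫ x in α..b, h x :=
      (intervalIntegral.integral_add_adjacent_intervals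
        (hhi a α le_rfl haα hαb) (hhi α b haα hαb le_rfl)).symm
    linarith [hsplit, hleft, hright]
  have hexp : (∫ x in a..b, h x) = (∫ x in a..b, f x) - K * (b - a) := by
    simp only [hh]
    rw [intervalIntegral.integral_sub (hfi a b le_rfl hab le_rfl) intervalIntegrable_const,
      intervalIntegral.integral_const, smul_eq_mul]
    ring
  rw [hexp] at htot
  have : K * (b - a) = (c + f α) * (b - a) := by rw [hK]; ring
  linarith [htot, this.ge]
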